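/- For every k ∈ ℕ, MTL_{k+1} is strictly more expressive than MTL_k: the formula φ[k+1], defined by φ[1] = p ∧ X p and φ[m+1] = p ∧ X φ[m], has until rank k+1 and is not equivalent to any MTL formula of until rank at most k. -/

import Mathlib

/-- Integers extended with `-∞` (`⊥`) and `+∞` (`⊤`), used as interval endpoints. -/
abbrev MTLEInt := WithBot (WithTop ℤ)

def MTLEInt.ofInt (n : ℤ) : MTLEInt := ((n : WithTop ℤ) : MTLEInt)

/-- An interval of integers, given by two (possibly infinite) endpoints and
openness flags. -/
structure Iv where
  lo : MTLEInt
  hi : MTLEInt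
  loOpen : Bool
  hiOpen : Bool

/-- Membership of an integer in an interval. -/
def Iv.mem (I : Iv) (d : ℤ) : Prop :=
  (if I.loOpen then I.lo < MTLEInt.ofInt d else I.lo ≤ MTLEInt.ofInt d) ∧
  (if I.hiOpen then MTLEInt.ofInt d < I.hi else MTLEInt.ofInt d ≤ I.hi)

/-- The interval `(-∞, +∞)`. -/
def Iv.univ : Iv := ⟨⊥, ⊤, true, true⟩

/-- The singleton interval `[n, n]`. -/
def Iv.pt (n : ℤ) : Iv := ⟨MTLEInt.ofInt n, MTLEInt.ofInt n, false, false⟩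

/-- A data word: an infinite sequence of pairs of a set of propositions and a
natural number data value. -/
abbrev DataWord (P : Type) := ℕ → (Set P) × ℕ

/-- Syntax of MTL: atoms, negation, conjunction, and interval-constrained
strict until. -/
inductive MTL (P : Type) where
  | atom : P → MTL P
  | neg  : MTL P → MTL P
  | and  : MTL P → MTL P → MTL P
  | untl : MTL P → Iv → MTL P → MTL P

/-- Satisfaction of an MTL formula at position `i` of data word `w`. -/
def MTL.sat {P : Type} (w : DataWord P) : ℕ → MTL P → Prop
  | i, .atom p => p ∈ (w i).1
  | i, .neg φ => ¬ MTL.sat w i φ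
  | i, .and φ ψ => MTL.sat w i φ ∧ MTL.sat w i ψ
  | i, .untl φ I ψ => ∃ j, i < j ∧ MTL.sat w j ψ ∧
      I.mem (((w j).2 : ℤ) - ((w i).2 : ℤ)) ∧
      ∀ k, i < k → k < j → MTL.sat w k φ

/-- A data word satisfies an MTL formula if it holds at position `0`. -/
def MTL.models {P : Type} (w : DataWord P) (φ : MTL P) : Prop := MTL.sat w 0 φ

/-- The until rank of an MTL formula. -/
def MTL.urk {P : Type} : MTL P → ℕ
  | .atom _ => 0
  | .neg φ => φ.urk
  | .and φ ψ => max φ.urk ψ.urk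
  | .untl φ _ ψ => max φ.urk ψ.urk + 1

/-- All interval endpoints of until operators in the formula lie in `S`. -/
def MTL.endpointsIn {P : Type} : MTL P → Set MTLEInt → Prop
  | .atom _, _ => True
  | .neg φ, S => φ.endpointsIn S
  | .and φ ψ, S => φ.endpointsIn S ∧ ψ.endpointsIn S
  | .untl φ I ψ, S => I.lo ∈ S ∧ I.hi ∈ S ∧ φ.endpointsIn S ∧ ψ.endpointsIn S

/-- An MTL falsity constant over `Bool`. -/
def mff : MTL Bool := .and (.atom true) (.neg (.atom true))

/-- The next operator `X φ := false U φ`. -/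
def mX (φ : MTL Bool) : MTL Bool := .untl mff Iv.univ φ

/-- `phiU k` is the formula `φ[k+1]`: `φ[1] = p ∧ X p`,
`φ[m+1] = p ∧ X φ[m]`, with `p` the atom `true`. -/
def phiU : ℕ → MTL Bool
  | 0 => .and (.atom true) (mX (.atom true))
  | m + 1 => .and (.atom true) (mX (phiU m))


/-! ### Auxiliary development for the hierarchy theorem -/

lemma iv_univ_mem (d : ℤ) : Iv.univ.mem d := by
  refine ⟨?_, ?_⟩ <;> simp only [Iv.univ, MTLEInt.ofInt, if_true]
  · exact WithBot.bot_lt_coe _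
  · exact WithBot.coe_lt_coe.mpr (WithTop.coe_lt_top d)

/-- The witness word family: `true` holds at positions `< t`, data all `0`. -/
def un (t : ℕ) : DataWord Bool := fun i => (if i < t then {true} else (∅ : Set Bool), 0)

lemma sat_mff (w : DataWord Bool) (i : ℕ) : ¬ MTL.sat w i mff := by
  intro h
  exact h.2 h.1

lemma sat_mX (w : DataWord Bool) (i : ℕ) (φ : MTL Bool) :
    MTL.sat w i (mX φ) ↔ MTL.sat w (i + 1) φ := by
  constructor
  · rintro ⟨j, hij, hφ, -, hmid⟩
    rcases Nat.lt_or_ge (i + 1) j with h | h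
    · exact absurd (hmid (i + 1) (Nat.lt_succ_self i) h) (sat_mff w (i + 1))
    · have : j = i + 1 := le_antisymm h hij
      rwa [this] at hφ
  · intro h
    exact ⟨i + 1, Nat.lt_succ_self i, h, iv_univ_mem _, fun k h1 h2 => absurd h2 (by omega)⟩

/-- Generic shift lemma. -/
lemma sat_shift {P : Type} (ψ : MTL P) :
    ∀ (w : DataWord P) (d i : ℕ),
      MTL.sat (fun n => w (d + n)) i ψ ↔ MTL.sat w (d + i) ψ := by
  induction ψ with
  | atom p => intro w d i; exact Iff.rfl
  | neg φ ih => intro w d i; exact not_congr (ih w d i)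
  | and φ χ ihφ ihχ => intro w d i; exact and_congr (ihφ w d i) (ihχ w d i)
  | untl φ I χ ihφ ihχ =>
    intro w d i
    constructor
    · rintro ⟨j, hij, hχ, hI, hφ⟩
      refine ⟨d + j, by omega, (ihχ w d j).mp hχ, hI, ?_⟩
      intro k hk1 hk2
      have h := (ihφ w d (k - d)).mp (hφ (k - d) (by omega) (by omega))
      rwa [show d + (k - d) = k by omega] at h
    · rintro ⟨j, hij, hχ, hI, hφ⟩
      refine ⟨j - d, by omega, ?_, ?_, ?_⟩
      · rw [ihχ w d (j - d), show d + (j - d) = j by omega]; exact hχ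
      · show I.mem (((w (d + (j - d))).2 : ℤ) - ((w (d + i)).2 : ℤ))
        rwa [show d + (j - d) = j by omega]
      · intro k hk1 hk2
        exact (ihφ w d k).mpr (hφ (d + k) (by omega) (by omega))

lemma un_shift (t d : ℕ) : (fun n => un t (d + n)) = un (t - d) := by
  funext n
  simp only [un]
  rw [if_congr (by omega : d + n < t ↔ n < t - d) rfl rfl]

lemma sat_un_pos (ψ : MTL Bool) (t j : ℕ) :
    MTL.sat (un t) j ψ ↔ MTL.sat (un (t - j)) 0 ψ := by
  have h := sat_shift ψ (un t) j 0
  rw [un_shift, Nat.add_zero] at h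
  exact h.symm

lemma atom_un (t i : ℕ) : MTL.sat (un t) i (.atom true) ↔ i < t := by
  by_cases h : i < t <;> simp [MTL.sat, un, h]

/-- `un t` data values are all `0`, so the interval constraint is independent of `t`. -/
lemma un_snd (t i : ℕ) : (un t i).2 = 0 := rfl

/-- Key stutter lemma: a formula of until rank `r` cannot distinguish `un t`
from `un (t+1)` once `t ≥ r + 1`. -/
lemma step_lemma (ψ : MTL Bool) :
    ∀ t : ℕ, ψ.urk + 1 ≤ t → (MTL.sat (un t) 0 ψ ↔ MTL.sat (un (t + 1)) 0 ψ) := by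
  induction ψ with
  | atom p =>
    intro t ht
    have h1 : (0 : ℕ) < t := by simp only [MTL.urk] at ht; omega
    by_cases hp : p = true <;> simp [MTL.sat, un, h1, hp]
  | neg φ ih =>
    intro t ht
    exact not_congr (ih t ht)
  | and φ χ ihφ ihχ =>
    intro t ht
    simp only [MTL.urk] at ht
    exact and_congr (ihφ t (by omega)) (ihχ t (by omega))
  | untl φ I χ ihφ ihχ =>
    intro t ht
    simp only [MTL.urk] at ht
    have hφr : φ.urk ≤ max φ.urk χ.urk := le_max_left _ _
    have hχr : χ.urk ≤ max φ.urk χ.urk := le_max_right _ _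
    set r0 := max φ.urk χ.urk with hr0
    -- t ≥ r0 + 2
    constructor
    · rintro ⟨j, hj, hχs, hI, hφs⟩
      rw [sat_un_pos] at hχs
      by_cases hc : r0 + 1 ≤ t - j
      · refine ⟨j, hj, ?_, hI, ?_⟩
        · rw [sat_un_pos]
          have h := (ihχ (t - j) (by omega)).mp hχs
          rwa [show t - j + 1 = t + 1 - j by omega] at h
        · intro k hk1 hk2
          rw [sat_un_pos]
          have h := hφs k hk1 hk2
          rw [sat_un_pos] at h
          have h2 := (ihφ (t - k) (by omega)).mp h
          rwa [show t - k + 1 = t + 1 - k by omega] at h2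
      · have hj2 : 2 ≤ j := by omega
        refine ⟨j + 1, by omega, ?_, hI, ?_⟩
        · rw [sat_un_pos, show t + 1 - (j + 1) = t - j by omega]
          exact hχs
        · intro k hk1 hk2
          rw [sat_un_pos]
          by_cases hk : k = 1
          · subst hk
            have h := hφs 1 (by omega) (by omega)
            rw [sat_un_pos] at h
            have h2 := (ihφ (t - 1) (by omega)).mp h
            rwa [show t - 1 + 1 = t + 1 - 1 by omega] at h2
          · have h := hφs (k - 1) (by omega) (by omega)
            rw [sat_un_pos] at h
            rwa [show t + 1 - k = t - (k - 1) by omega]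
    · rintro ⟨j, hj, hχs, hI, hφs⟩
      rw [sat_un_pos] at hχs
      by_cases hc : r0 + 1 ≤ t - j
      · refine ⟨j, hj, ?_, hI, ?_⟩
        · rw [sat_un_pos]
          rw [show t + 1 - j = t - j + 1 by omega] at hχs
          exact (ihχ (t - j) (by omega)).mpr hχs
        · intro k hk1 hk2
          rw [sat_un_pos]
          have h := hφs k hk1 hk2
          rw [sat_un_pos, show t + 1 - k = t - k + 1 by omega] at h
          exact (ihφ (t - k) (by omega)).mpr h
      · have hj2 : 2 ≤ j := by omega
        refine ⟨j - 1, by omega, ?_, hI, ?_⟩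
        · rw [sat_un_pos, show t - (j - 1) = t + 1 - j by omega]
          exact hχs
        · intro k hk1 hk2
          rw [sat_un_pos]
          have h := hφs (k + 1) (by omega) (by omega)
          rw [sat_un_pos] at h
          rwa [show t + 1 - (k + 1) = t - k by omega] at h

lemma urk_phiU (k : ℕ) : (phiU k).urk = k + 1 := by
  induction k with
  | zero => simp [phiU, mX, mff, MTL.urk]
  | succ m ih =>
    simp only [phiU, mX, mff, MTL.urk] at *
    omega

lemma phiU_un_iff (k : ℕ) : ∀ t : ℕ, MTL.sat (un t) 0 (phiU k) ↔ k + 2 ≤ t := by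
  induction k with
  | zero =>
    intro t
    show MTL.sat (un t) 0 (.and (.atom true) (mX (.atom true))) ↔ _
    rw [show MTL.sat (un t) 0 (.and (.atom true) (mX (.atom true))) =
      (MTL.sat (un t) 0 (.atom true) ∧ MTL.sat (un t) 0 (mX (.atom true))) from rfl]
    rw [sat_mX, atom_un, atom_un]
    omega
  | succ m ih =>
    intro t
    show MTL.sat (un t) 0 (.and (.atom true) (mX (phiU m))) ↔ _
    rw [show MTL.sat (un t) 0 (.and (.atom true) (mX (phiU m))) =
      (MTL.sat (un t) 0 (.atom true) ∧ MTL.sat (un t) 0 (mX (phiU m))) from rfl]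
    rw [sat_mX, atom_un, sat_un_pos, ih (t - 1)]
    omega

/-- The until hierarchy of MTL is strict: `φ[k+1]` has until rank `k+1` and
is not equivalent to any MTL formula of until rank at most `k`. -/
theorem mtl_until_hierarchy (k : ℕ) :
    MTL.urk (phiU k) = k + 1 ∧
    ¬ ∃ ψ : MTL Bool, MTL.urk ψ ≤ k ∧
        ∀ w : DataWord Bool, MTL.models w ψ ↔ MTL.models w (phiU k) := by
  refine ⟨urk_phiU k, ?_⟩
  rintro ⟨ψ, hr, heq⟩
  have h1 := heq (un (k + 1))
  have h2 := heq (un (k + 2))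
  rw [MTL.models, MTL.models, phiU_un_iff] at h1 h2
  have hs := step_lemma ψ (k + 1) (by omega)
  rw [show k + 1 + 1 = k + 2 from rfl] at hs
  exact absurd (h1.mp (hs.mpr (h2.mpr (by omega)))) (by omega)
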